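/- If φ(p) = A₁e^{γp} + A₂pe^{γp} satisfies φ(−1) = 0 and β(α_c,γ)A₁ − (p₀²/γ)(γA₁ + A₂) = 0, where 0 < γ < 1, p₀ ≠ 0, β(α,γ) = γ²e^{3γ}(α − e^{γ}), and α_c = e^{γ} + 2p₀²/(γ²e^{γ}(e^{2γ}−1)), then A₁ = A₂ = 0. -/
import Mathlib

open Real

lemma key_ineq (γ : ℝ) (h0 : 0 < γ) (h1 : γ < 1) :
    (1 - γ) * Real.exp (2 * γ) < 1 + γ := by
  have hb := Real.exp_bound (x := γ) (by rw [abs_of_pos h0]; linarith) (n := 4) (by norm_num)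
  have hsum : (∑ i ∈ Finset.range 4, γ ^ i / (Nat.factorial i : ℝ))
      = 1 + γ + γ ^ 2 / 2 + γ ^ 3 / 6 := by
    norm_num [Finset.sum_range_succ, Nat.factorial]
    try ring
  rw [hsum, abs_of_pos h0] at hb
  have hE : Real.exp γ ≤ 1 + γ + γ ^ 2 / 2 + γ ^ 3 / 6 + γ ^ 4 * (5 / 96) := by
    have := abs_le.mp hb
    have h2 : (((4 : ℕ) + 1 : ℕ) : ℝ) / ((Nat.factorial 4 : ℝ) * 4) = 5 / 96 := by
      norm_num [Nat.factorial]
    nlinarith [this.2]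
  have hEpos := Real.exp_pos γ
  have h2γ : Real.exp (2 * γ) = Real.exp γ * Real.exp γ := by
    rw [← Real.exp_add]; ring_nf
  rw [h2γ]
  nlinarith [pow_pos h0 3, pow_pos h0 4, pow_pos h0 5, pow_pos h0 6,
    pow_pos h0 7, pow_pos h0 8, pow_pos h0 9, sq_nonneg γ,
    mul_pos h0 h0, hEpos]

theorem stmt_8 (γ p₀ : ℝ) (hγ0 : 0 < γ) (hγ1 : γ < 1) (hp : p₀ ≠ 0)
    (β : ℝ → ℝ) (hβ : ∀ α, β α = γ ^ 2 * Real.exp (3 * γ) * (α - Real.exp γ))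
    (αc : ℝ)
    (hαc : αc = Real.exp γ + 2 * p₀ ^ 2 / (γ ^ 2 * Real.exp γ * (Real.exp (2 * γ) - 1)))
    (A₁ A₂ : ℝ)
    (hbd : A₁ * Real.exp (γ * (-1)) + A₂ * (-1) * Real.exp (γ * (-1)) = 0)
    (hbc : β αc * A₁ - (p₀ ^ 2 / γ) * (γ * A₁ + A₂) = 0) :
    A₁ = 0 ∧ A₂ = 0 := by
  have hexpne : Real.exp (γ * (-1)) ≠ 0 := (Real.exp_pos _).ne'
  have hA : A₂ = A₁ := by
    have : (A₁ - A₂) * Real.exp (γ * (-1)) = 0 := by linarith [hbd]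
    have := (mul_eq_zero.mp this).resolve_right hexpne
    linarith
  subst hA
  rw [hβ, hαc] at hbc
  set E := Real.exp γ with hE
  set E2 := Real.exp (2 * γ) with hE2
  set E3 := Real.exp (3 * γ) with hE3
  have hEpos : 0 < E := Real.exp_pos γ
  have hE2gt : 1 < E2 := by
    rw [hE2]
    exact Real.one_lt_exp_iff.mpr (by positivity)
  have hE3eq : E3 = E * E2 := by
    rw [hE3, hE, hE2, ← Real.exp_add]; ring_nf
  set c : ℝ := γ ^ 2 * E3 * (E + 2 * p₀ ^ 2 / (γ ^ 2 * E * (E2 - 1)) - E)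
      - (p₀ ^ 2 / γ) * (γ + 1) with hc
  have h0 : c * A₂ = 0 := by
    rw [hc]; linear_combination hbc
  have hkey := key_ineq γ hγ0 hγ1
  have hcpos : 0 < c := by
    have hceq : c = p₀ ^ 2 * ((1 + γ) - (1 - γ) * E2) / (γ * (E2 - 1)) := by
      have hγne : γ ≠ 0 := hγ0.ne'
      have hEne : E ≠ 0 := hEpos.ne'
      have hE2ne : E2 - 1 ≠ 0 := by nlinarith
      rw [hc, hE3eq]
      field_simp
      ring
    rw [hceq]
    apply div_pos
    · have : 0 < p₀ ^ 2 := by positivity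
      nlinarith
    · nlinarith
  have hA2 : A₂ = 0 := by
    rcases mul_eq_zero.mp h0 with h | h
    · exact absurd h hcpos.ne'
    · exact h
  exact ⟨hA2, hA2⟩
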